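/- Suppose f, g : ℕ → ℤ satisfy, for n beyond some index, f(n) = g(n - g(n-1) - c_f) + d_f and g(n) = f(n - f(n) - c_g) + d_g with d_f + d_g > 0, and suppose both sequences are well-defined, nonnegative, and slow (successive differences in {0,1}) and unbounded. If f(n)/√n and g(n)/√n both converge to a common limit L, then L = √(d_f + d_g). -/

import Mathlib

open Filter


private noncomputable def sx (D F F' : ℝ) : ℝ := (F^2 - F'^2)/(2*D) + (F - F')/2

private def mfun (g : ℕ → ℤ) (cf : ℤ) (n : ℕ) : ℕ := ((n : ℤ) - g (n - 1) - cf).toNat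

private def kfun (f g : ℕ → ℤ) (cf cg : ℤ) (n : ℕ) : ℕ :=
  ((mfun g cf n : ℤ) - f (mfun g cf n) - cg).toNat

private lemma sqrt_natcast_tendsto : Tendsto (fun n : ℕ => Real.sqrt n) atTop atTop := by
  rw [tendsto_atTop_atTop]
  intro b
  refine ⟨⌈b^2⌉₊, fun n hn => ?_⟩
  rcases le_or_gt b 0 with hb | hb
  · exact hb.trans (Real.sqrt_nonneg _)
  · have h : (b^2 : ℝ) ≤ n := le_trans (Nat.le_ceil _) (by exact_mod_cast hn)
    calc b = Real.sqrt (b^2) := (Real.sqrt_sq hb.le).symm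
    _ ≤ Real.sqrt n := Real.sqrt_le_sqrt h

private lemma sub_sqrt_tendsto (c : ℝ) :
    Tendsto (fun n : ℕ => (n:ℝ) - c * Real.sqrt n) atTop atTop := by
  have h2 : Tendsto (fun n : ℕ => Real.sqrt n * (Real.sqrt n - c)) atTop atTop :=
    sqrt_natcast_tendsto.atTop_mul_atTop₀
      (tendsto_atTop_add_const_right _ (-c) sqrt_natcast_tendsto)
  refine h2.congr fun n => ?_
  have : Real.sqrt n * Real.sqrt n = (n:ℝ) := Real.mul_self_sqrt (Nat.cast_nonneg n)
  nlinarith [this]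

private lemma ratio_bound (h : ℕ → ℤ) {L : ℝ}
    (hL : Tendsto (fun n : ℕ => (h n : ℝ) / Real.sqrt n) atTop (nhds L))
    {δ : ℝ} (hδ : 0 < δ) :
    ∀ᶠ n : ℕ in atTop, |(h n : ℝ) - L * Real.sqrt n| ≤ δ * Real.sqrt n := by
  have h1 : ∀ᶠ n : ℕ in atTop, dist ((h n : ℝ)/Real.sqrt n) L < δ :=
    Metric.tendsto_nhds.mp hL δ hδ
  filter_upwards [h1, eventually_ge_atTop 1] with n hn hn1
  have hs : (0:ℝ) < Real.sqrt n := Real.sqrt_pos.2 (by exact_mod_cast hn1)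
  rw [Real.dist_eq] at hn
  have he : (h n : ℝ) - L * Real.sqrt n = ((h n : ℝ)/Real.sqrt n - L) * Real.sqrt n := by
    field_simp
  rw [he, abs_mul, abs_of_pos hs]
  exact mul_le_mul_of_nonneg_right hn.le hs.le

private lemma sqrt_diff {a b : ℝ} (ha : 0 ≤ a) (hb : 0 < b) :
    |Real.sqrt a - Real.sqrt b| * Real.sqrt b ≤ |a - b| := by
  have h1 : Real.sqrt a * Real.sqrt a = a := Real.mul_self_sqrt ha
  have h2 : Real.sqrt b * Real.sqrt b = b := Real.mul_self_sqrt hb.le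
  have h3 : |a - b| = |Real.sqrt a - Real.sqrt b| * (Real.sqrt a + Real.sqrt b) := by
    rw [← abs_of_nonneg (by positivity : (0:ℝ) ≤ Real.sqrt a + Real.sqrt b), ← abs_mul]
    congr 1; nlinarith
  rw [h3]
  have h4 : Real.sqrt b ≤ Real.sqrt a + Real.sqrt b := by
    nlinarith [Real.sqrt_nonneg a]
  exact mul_le_mul_of_nonneg_left h4 (abs_nonneg _)

set_option maxHeartbeats 1000000 in
private lemma pack (f g : ℕ → ℤ) (cf df cg dg : ℤ) (N : ℕ) (L : ℝ)
    (hL0 : 0 ≤ L)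
    (hfrec : ∀ n : ℕ, N < n → f n = g ((n : ℤ) - g (n - 1) - cf).toNat + df)
    (hgrec : ∀ n : ℕ, N < n → g n = f ((n : ℤ) - f n - cg).toNat + dg)
    (hgpos : ∀ n : ℕ, 0 ≤ g n)
    (hfL : Tendsto (fun n : ℕ => (f n : ℝ) / Real.sqrt n) atTop (nhds L))
    (hgL : Tendsto (fun n : ℕ => (g n : ℝ) / Real.sqrt n) atTop (nhds L))
    {δ : ℝ} (hδ : 0 < δ) :
    ∀ᶠ n : ℕ in atTop,
      f n = f (kfun f g cf cg n) + (df + dg) ∧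
      |((n:ℝ) - (kfun f g cf cg n : ℝ)) - 2*L*Real.sqrt n| ≤ δ * Real.sqrt n := by
  set δ' : ℝ := δ/8 with hδ'def
  have hδ' : 0 < δ' := by positivity
  have Ef := ratio_bound f hfL hδ'
  have Eg := ratio_bound g hgL hδ'
  obtain ⟨Nf, hNf⟩ := eventually_atTop.mp Ef
  obtain ⟨Ng, hNg⟩ := eventually_atTop.mp Eg
  -- inner threshold N₅ : conditions on p = mfun n
  obtain ⟨N₅, hN₅⟩ := eventually_atTop.mp
    (((sub_sqrt_tendsto (L+δ')).eventually_ge_atTop |(cg:ℝ)|).and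
      ((eventually_gt_atTop N).and (eventually_ge_atTop Nf)))
  set B : ℝ := 2*L + δ' + |(cf:ℝ)| with hBdef
  have hB0 : 0 ≤ B := by positivity
  set E : ℝ := L + (δ' + L) * B + |(cf:ℝ)| + |(cg:ℝ)| with hEdef
  have hE0 : 0 ≤ E := by positivity
  filter_upwards [eventually_ge_atTop 1, eventually_gt_atTop N,
    eventually_ge_atTop (Ng + 1),
    (sub_sqrt_tendsto (L+δ')).eventually_ge_atTop ((N₅:ℝ) + 1 + L + |(cf:ℝ)|),
    sqrt_natcast_tendsto.eventually_ge_atTop (2*E/δ)]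
    with n hn1 hnN hnNg hn4 hn5
  have hmN : mfun g cf n = ((n:ℤ) - g (n-1) - cf).toNat := rfl
  set p := mfun g cf n with hpdef
  have hkN : kfun f g cf cg n = ((p : ℤ) - f p - cg).toNat := rfl
  set q := kfun f g cf cg n with hqdef
  -- basic sqrt facts
  have hn1R : (1:ℝ) ≤ (n:ℝ) := by exact_mod_cast hn1
  have hsn1 : 1 ≤ Real.sqrt n := by
    rw [show (1:ℝ) = Real.sqrt 1 by simp]
    exact Real.sqrt_le_sqrt hn1R
  have hsn0 : 0 < Real.sqrt n := lt_of_lt_of_le one_pos hsn1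
  have hrcast : ((n-1 : ℕ) : ℝ) = (n:ℝ) - 1 := by
    have h : (1:ℕ) ≤ n := hn1
    push_cast [h]
    ring
  have hgb : |(g (n-1) : ℝ) - L * Real.sqrt ((n-1:ℕ):ℝ)| ≤ δ' * Real.sqrt ((n-1:ℕ):ℝ) :=
    hNg _ (by omega)
  have hsr_le : Real.sqrt ((n-1:ℕ):ℝ) ≤ Real.sqrt n := Real.sqrt_le_sqrt (by rw [hrcast]; linarith)
  have hsr_ge : Real.sqrt (n:ℝ) - 1 ≤ Real.sqrt ((n-1:ℕ):ℝ) := by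
    have h0 : (0:ℝ) ≤ ((n-1:ℕ):ℝ) := Nat.cast_nonneg _
    have hs := Real.sqrt_nonneg ((n-1:ℕ):ℝ)
    have hsq := Real.sq_sqrt h0
    have hb : (n:ℝ) ≤ (Real.sqrt ((n-1:ℕ):ℝ) + 1)^2 := by nlinarith [hrcast]
    have := (Real.sqrt_le_sqrt hb).trans_eq (Real.sqrt_sq (by linarith))
    linarith
  -- bound on g(n-1) relative to √n
  have hg1 : |(g (n-1):ℝ) - L * Real.sqrt n| ≤ δ' * Real.sqrt n + L := by
    obtain ⟨ha, hb⟩ := abs_le.mp hgb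
    have c1 : δ' * Real.sqrt ((n-1:ℕ):ℝ) ≤ δ' * Real.sqrt n :=
      mul_le_mul_of_nonneg_left hsr_le hδ'.le
    have c2 : L * Real.sqrt ((n-1:ℕ):ℝ) ≤ L * Real.sqrt n :=
      mul_le_mul_of_nonneg_left hsr_le hL0
    have c3 : L * (Real.sqrt (n:ℝ) - 1) ≤ L * Real.sqrt ((n-1:ℕ):ℝ) :=
      mul_le_mul_of_nonneg_left hsr_ge hL0
    rw [abs_le]
    constructor <;> linarith
  -- exactness of p
  have hgub : (g (n-1):ℝ) ≤ (L + δ') * Real.sqrt n + L := by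
    have := (abs_le.mp hg1).2
    linarith
  have hmR : ((N₅:ℝ) + 1) ≤ (n:ℝ) - (g (n-1):ℝ) - (cf:ℝ) := by
    have h1 : (cf:ℝ) ≤ |(cf:ℝ)| := le_abs_self _
    linarith [hn4]
  have hmZ : (N₅ : ℤ) + 1 ≤ (n:ℤ) - g (n-1) - cf := by exact_mod_cast hmR
  have hpz : (p:ℤ) = (n:ℤ) - g (n-1) - cf := by
    rw [hmN]; exact Int.toNat_of_nonneg (by omega)
  have hpN₅ : N₅ ≤ p := by omega
  obtain ⟨hq1, hq2, hq3⟩ := hN₅ p hpN₅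
  -- bound on f p
  have hfb : |(f p : ℝ) - L * Real.sqrt p| ≤ δ' * Real.sqrt p := hNf p hq3
  -- exactness of q
  have hkR : (0:ℝ) ≤ (p:ℝ) - (f p:ℝ) - (cg:ℝ) := by
    have h1 := (abs_le.mp hfb).2
    have h2 : (cg:ℝ) ≤ |(cg:ℝ)| := le_abs_self _
    linarith [hq1]
  have hkZ : (0:ℤ) ≤ (p:ℤ) - f p - cg := by exact_mod_cast hkR
  have hqz : (q:ℤ) = (p:ℤ) - f p - cg := by
    rw [hkN]; exact Int.toNat_of_nonneg hkZ
  -- recurrence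
  have hrec : f n = f q + (df + dg) := by
    have h1 := hfrec n hnN
    rw [← hmN] at h1
    have h2 := hgrec p hq2
    rw [← hkN] at h2
    rw [h1, h2]; ring
  refine ⟨hrec, ?_⟩
  -- gap formula
  have hgapZ : (q:ℤ) = (n:ℤ) - g (n-1) - cf - f p - cg := by omega
  have hgap : (n:ℝ) - (q:ℝ) = (g (n-1) : ℝ) + (f p : ℝ) + (cf:ℝ) + (cg:ℝ) := by
    have h4 : ((q:ℕ):ℝ) = (n:ℝ) - (g (n-1):ℝ) - (cf:ℝ) - (f p:ℝ) - (cg:ℝ) := by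
      exact_mod_cast hgapZ
    linarith [h4]
  -- |p - n| bound
  have hpnR : (p:ℝ) = (n:ℝ) - (g (n-1):ℝ) - (cf:ℝ) := by exact_mod_cast hpz
  have hLcf : L + |(cf:ℝ)| ≤ (L + |(cf:ℝ)|) * Real.sqrt n := by
    nlinarith [abs_nonneg (cf:ℝ), hsn1, hL0]
  have hpn : |(p:ℝ) - (n:ℝ)| ≤ B * Real.sqrt n := by
    rw [abs_le, hBdef]
    have hg0 : (0:ℝ) ≤ (g (n-1):ℝ) := by exact_mod_cast hgpos (n-1)
    have h1 : -|(cf:ℝ)| ≤ (cf:ℝ) := neg_abs_le _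
    have h2 : |(cf:ℝ)| ≤ |(cf:ℝ)| * Real.sqrt n := by
      nlinarith [abs_nonneg (cf:ℝ), hsn1]
    have h3 : (0:ℝ) ≤ L * Real.sqrt n := mul_nonneg hL0 hsn0.le
    have h4 : (0:ℝ) ≤ δ' * Real.sqrt n := mul_nonneg hδ'.le hsn0.le
    constructor
    · nlinarith [hgub, hLcf, le_abs_self (cf:ℝ)]
    · nlinarith [hg0]
  have hsp : |Real.sqrt p - Real.sqrt n| ≤ B := by
    have h5 := sqrt_diff (Nat.cast_nonneg p) (show (0:ℝ) < (n:ℝ) by linarith)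
    have h6 : |Real.sqrt (p:ℝ) - Real.sqrt (n:ℝ)| * Real.sqrt n ≤ B * Real.sqrt n :=
      h5.trans hpn
    exact le_of_mul_le_mul_right h6 hsn0
  have hfpb : |(f p : ℝ) - L * Real.sqrt n| ≤ δ' * Real.sqrt n + (δ' + L) * B := by
    obtain ⟨ha, hb⟩ := abs_le.mp hfb
    obtain ⟨hc, hd⟩ := abs_le.mp hsp
    have c1 : δ' * Real.sqrt p ≤ δ' * (Real.sqrt n + B) :=
      mul_le_mul_of_nonneg_left (by linarith) hδ'.le
    have c2 : L * Real.sqrt p ≤ L * (Real.sqrt n + B) :=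
      mul_le_mul_of_nonneg_left (by linarith) hL0
    have c3 : L * (Real.sqrt n - B) ≤ L * Real.sqrt p :=
      mul_le_mul_of_nonneg_left (by linarith) hL0
    rw [abs_le]
    constructor <;> linarith
  -- absorb constants
  have hE : E ≤ (δ/2) * Real.sqrt n := by
    have h7 : (δ/2) * (2*E/δ) ≤ (δ/2) * Real.sqrt n :=
      mul_le_mul_of_nonneg_left hn5 (by positivity)
    have h8 : (δ/2) * (2*E/δ) = E := by field_simp
    linarith
  rw [hgap, abs_le]
  obtain ⟨ha, hb⟩ := abs_le.mp hg1
  obtain ⟨hc, hd⟩ := abs_le.mp hfpb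
  have h9 : -(cf:ℝ) - (cg:ℝ) ≤ |(cf:ℝ)| + |(cg:ℝ)| := by
    have := neg_abs_le (cf:ℝ); have := neg_abs_le (cg:ℝ); linarith
  have h10 : (cf:ℝ) + (cg:ℝ) ≤ |(cf:ℝ)| + |(cg:ℝ)| := by
    have := le_abs_self (cf:ℝ); have := le_abs_self (cg:ℝ); linarith
  have hds : δ' * Real.sqrt n = δ/8 * Real.sqrt n := by rw [hδ'def]
  have hEe : E = L + (δ' + L) * B + |(cf:ℝ)| + |(cg:ℝ)| := hEdef
  have hdn : (0:ℝ) ≤ δ * Real.sqrt n := mul_nonneg hδ.le hsn0.le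
  constructor <;> linarith

private lemma sx_mono (D F a b : ℝ) (hD : 0 < D) (h0 : 0 ≤ a) (hab : a ≤ b) :
    sx D F b ≤ sx D F a := by
  unfold sx
  have h1 : (0:ℝ) ≤ (b^2 - a^2)/(2*D) := div_nonneg (by nlinarith) (by linarith)
  have h2 : (F^2 - b^2)/(2*D) + (b^2 - a^2)/(2*D) = (F^2 - a^2)/(2*D) := by ring
  linarith


private lemma sx_base (D F : ℝ) (hD : D ≠ 0) : sx D F (F - D) = F := by
  unfold sx; field_simp; ring

private lemma sx_step (D F F' : ℝ) (hD : D ≠ 0) : sx D F F' = F + sx D (F - D) F' := by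
  unfold sx; field_simp; ring

private lemma chain_lemma (f : ℕ → ℤ) (k : ℕ → ℕ) (D : ℤ) (hD : 0 < D)
    (N₃ n₀ : ℕ) (u v w : ℝ)
    (hstep : ∀ m : ℕ, N₃ ≤ m → m ≤ n₀ →
      k m < m ∧ f m = f (k m) + D ∧
      u * (f m : ℝ) ≤ (m : ℝ) - (k m : ℝ) ∧
      (m : ℝ) - (k m : ℝ) ≤ v * (f m : ℝ) + w) :
    ∀ n : ℕ, N₃ ≤ n → n ≤ n₀ → ∃ n' : ℕ, n' < N₃ ∧ f n' ≤ f n ∧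
      u * sx (D:ℝ) (f n) (f n') ≤ (n : ℝ) - (n' : ℝ) ∧
      (n : ℝ) - (n' : ℝ) ≤ v * sx (D:ℝ) (f n) (f n') + w * (((f n : ℝ) - (f n' : ℝ)) / (D : ℝ)) := by
  intro n
  induction n using Nat.strong_induction_on with
  | _ n ih =>
    intro hn hn0
    obtain ⟨hk, hrec, hlo, hhi⟩ := hstep n hn hn0
    have hDr : (0:ℝ) < (D:ℝ) := by exact_mod_cast hD
    have hfk : (f (k n) : ℝ) = (f n : ℝ) - (D : ℝ) := by rw [hrec]; push_cast; ring
    have hkn : (k n : ℝ) < (n : ℝ) := by exact_mod_cast hk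
    by_cases hcase : k n < N₃
    · refine ⟨k n, hcase, by omega, ?_, ?_⟩
      · rw [hfk, sx_base _ _ hDr.ne']
        linarith
      · rw [hfk, sx_base _ _ hDr.ne']
        have he : ((f n : ℝ) - ((f n : ℝ) - (D:ℝ)))/(D:ℝ) = 1 := by field_simp; ring
        rw [he]; linarith
    · obtain ⟨n', hn', hmono, hlo', hhi'⟩ :=
        ih (k n) hk (not_lt.mp hcase) (le_trans hk.le hn0)
      rw [hfk] at hlo' hhi'
      have hsx : sx (D:ℝ) (f n) (f n') = (f n : ℝ) + sx (D:ℝ) ((f n : ℝ) - D) (f n') :=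
        sx_step _ _ _ hDr.ne'
      have hw : w * (((f n : ℝ) - (f n' : ℝ)) / (D:ℝ))
          = w + w * ((((f n : ℝ) - (D:ℝ)) - (f n' : ℝ)) / (D:ℝ)) := by
        field_simp; ring
      refine ⟨n', hn', by omega, ?_, ?_⟩
      · rw [hsx]; nlinarith [hlo, hlo']
      · rw [hsx, hw]; nlinarith [hhi, hhi']

set_option maxHeartbeats 1000000 in
/-- Conditional version of the Golomb-like growth conjecture: if f, g satisfy a
Golomb-like system with parameters c_f, d_f, c_g, d_g (d_f + d_g > 0) beyond some
index, are nonnegative, slow and unbounded, and f(n)/√n and g(n)/√n converge to a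
common limit L, then L = √(d_f + d_g). -/
theorem stmt_15 (f g : ℕ → ℤ) (cf df cg dg : ℤ) (N : ℕ) (L : ℝ)
    (hd : 0 < df + dg)
    (hfrec : ∀ n : ℕ, N < n → f n = g ((n : ℤ) - g (n - 1) - cf).toNat + df)
    (hgrec : ∀ n : ℕ, N < n → g n = f ((n : ℤ) - f n - cg).toNat + dg)
    (hfpos : ∀ n : ℕ, 0 ≤ f n) (hgpos : ∀ n : ℕ, 0 ≤ g n)
    (hfslow : ∀ n : ℕ, f (n + 1) = f n ∨ f (n + 1) = f n + 1)
    (hgslow : ∀ n : ℕ, g (n + 1) = g n ∨ g (n + 1) = g n + 1)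
    (hfunbd : ∀ M : ℤ, ∃ n : ℕ, M ≤ f n)
    (hgunbd : ∀ M : ℤ, ∃ n : ℕ, M ≤ g n)
    (hfL : Tendsto (fun n : ℕ => (f n : ℝ) / Real.sqrt n) atTop (nhds L))
    (hgL : Tendsto (fun n : ℕ => (g n : ℝ) / Real.sqrt n) atTop (nhds L)) :
    L = Real.sqrt ((df : ℝ) + (dg : ℝ)) := by
  set D : ℤ := df + dg with hDdef
  have hD : 0 < D := hd
  have hDr : (0:ℝ) < (D:ℝ) := by exact_mod_cast hD
  have hmf : Monotone f := monotone_nat_of_le_succ fun n => by rcases hfslow n with h | h <;> omega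
  have hL0 : 0 ≤ L := by
    refine ge_of_tendsto hfL ?_
    filter_upwards [eventually_ge_atTop 1] with n hn
    have h1 : (0:ℝ) ≤ (f n : ℝ) := by exact_mod_cast hfpos n
    exact div_nonneg h1 (Real.sqrt_nonneg _)
  -- limit facts
  have hfLsq : Tendsto (fun n : ℕ => ((f n : ℝ))^2 / n) atTop (nhds (L^2)) := by
    have h2 : ∀ᶠ n : ℕ in atTop,
        ((f n:ℝ)/Real.sqrt n)*((f n:ℝ)/Real.sqrt n) = (f n:ℝ)^2 / n := by
      filter_upwards [eventually_ge_atTop 1] with n hn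
      have hs : Real.sqrt n * Real.sqrt n = (n:ℝ) := Real.mul_self_sqrt (Nat.cast_nonneg n)
      rw [div_mul_div_comm, hs]; ring
    have h3 := (hfL.mul hfL).congr' h2
    have h4 : L * L = L^2 := by ring
    rwa [h4] at h3
  have hlin : Tendsto (fun n : ℕ => (f n : ℝ) / n) atTop (nhds 0) := by
    have h4 : Tendsto (fun n : ℕ => (Real.sqrt n)⁻¹) atTop (nhds 0) :=
      tendsto_inv_atTop_zero.comp sqrt_natcast_tendsto
    have h5 := hfL.mul h4
    rw [mul_zero] at h5
    refine h5.congr' ?_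
    filter_upwards [eventually_ge_atTop 1] with n hn
    have hs : Real.sqrt n * Real.sqrt n = (n:ℝ) := Real.mul_self_sqrt (Nat.cast_nonneg n)
    have he : (f n:ℝ)/Real.sqrt n * (Real.sqrt n)⁻¹ = (f n:ℝ)/(Real.sqrt n * Real.sqrt n) := by
      ring
    rw [he, hs]
  have hTc : ∀ c : ℝ, Tendsto (fun n : ℕ => sx (D:ℝ) ((f n:ℝ)) c / (n:ℝ)) atTop
      (nhds (L^2/(2*(D:ℝ)))) := by
    intro c
    have h6 : Tendsto (fun n : ℕ =>
        ((f n:ℝ)^2/n)/(2*(D:ℝ)) - c^2/(2*(D:ℝ)) * (1/(n:ℝ)) + ((f n:ℝ)/n)/2 - c/2 * (1/(n:ℝ)))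
        atTop (nhds (L^2/(2*(D:ℝ)) - c^2/(2*(D:ℝ)) * 0 + 0/2 - c/2 * 0)) :=
      (((hfLsq.div_const _).sub
        (tendsto_one_div_atTop_nhds_zero_nat.const_mul _)).add (hlin.div_const _)).sub
        (tendsto_one_div_atTop_nhds_zero_nat.const_mul _)
    have h7 : L^2/(2*(D:ℝ)) - c^2/(2*(D:ℝ)) * 0 + 0/2 - c/2 * 0 = L^2/(2*(D:ℝ)) := by ring
    rw [h7] at h6
    refine h6.congr' ?_
    filter_upwards [eventually_ge_atTop 1] with n hn
    have hn0 : (0:ℝ) < (n:ℝ) := by exact_mod_cast hn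
    unfold sx
    field_simp
    ring
  rcases hL0.eq_or_lt with hLz | hLpos
  · -- L = 0 : derive a contradiction
    exfalso
    have hLz' : L = 0 := hLz.symm
    subst hLz'
    have P := pack f g cf df cg dg N 0 le_rfl hfrec hgrec hgpos hfL hgL
      (show (0:ℝ) < 1/2 by norm_num)
    have Rf := ratio_bound f hfL (show (0:ℝ) < 1/2 by norm_num)
    have Estep : ∀ᶠ m : ℕ in atTop,
        (kfun f g cf cg m < m ∧ f m = f (kfun f g cf cg m) + D) ∧
        ((m:ℝ) - (kfun f g cf cg m : ℝ) ≤ (1/2) * Real.sqrt m ∧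
          (f m : ℝ) ≤ (1/2) * Real.sqrt m) := by
      filter_upwards [P, Rf] with m hm hrm
      obtain ⟨hrec, hgapb⟩ := hm
      have hrec' : f m = f (kfun f g cf cg m) + D := by rw [hDdef]; exact hrec
      have hklt : kfun f g cf cg m < m := by
        by_contra hcon
        push_neg at hcon
        have := hmf hcon
        omega
      have hg2 : |((m:ℝ) - (kfun f g cf cg m : ℝ))| ≤ (1/2) * Real.sqrt m := by
        have : 2*(0:ℝ)*Real.sqrt m = 0 := by ring
        rw [this, sub_zero] at hgapb
        exact hgapb
      have hf2 : (f m : ℝ) ≤ (1/2) * Real.sqrt m := by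
        have h0 : (0:ℝ) * Real.sqrt m = 0 := by ring
        rw [h0, sub_zero] at hrm
        exact (abs_le.mp hrm).2
      exact ⟨⟨hklt, hrec'⟩, (abs_le.mp hg2).2, hf2⟩
    obtain ⟨N₃, hN₃⟩ := eventually_atTop.mp Estep
    set n₀ : ℕ := 2*N₃ + 4 with hn₀
    have hstep : ∀ m : ℕ, N₃ ≤ m → m ≤ n₀ →
        kfun f g cf cg m < m ∧ f m = f (kfun f g cf cg m) + D ∧
        (0:ℝ) * (f m : ℝ) ≤ (m : ℝ) - (kfun f g cf cg m : ℝ) ∧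
        (m : ℝ) - (kfun f g cf cg m : ℝ) ≤ (0:ℝ) * (f m : ℝ) + (1/2) * Real.sqrt n₀ := by
      intro m hm hmn₀
      obtain ⟨⟨hklt, hrec⟩, hgapb, hfmb⟩ := hN₃ m hm
      have hkR : ((kfun f g cf cg m : ℕ):ℝ) < (m:ℝ) := by exact_mod_cast hklt
      have hs : Real.sqrt m ≤ Real.sqrt n₀ := Real.sqrt_le_sqrt (by exact_mod_cast hmn₀)
      refine ⟨hklt, hrec, by rw [zero_mul]; linarith, by rw [zero_mul, zero_add]; linarith⟩
    obtain ⟨n', hn', hmono', _, hhi⟩ :=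
      chain_lemma f (kfun f g cf cg) D hD N₃ n₀ 0 0 ((1/2) * Real.sqrt n₀) hstep n₀
        (by omega) le_rfl
    obtain ⟨⟨_, _⟩, _, hfn₀⟩ := hN₃ n₀ (by omega)
    have hfn' : (0:ℝ) ≤ (f n' : ℝ) := by exact_mod_cast hfpos n'
    have hfn₀0 : (0:ℝ) ≤ (f n₀ : ℝ) := by exact_mod_cast hfpos n₀
    have hsq : Real.sqrt n₀ * Real.sqrt n₀ = (n₀:ℝ) := Real.mul_self_sqrt (Nat.cast_nonneg _)
    have hD1 : (1:ℝ) ≤ (D:ℝ) := by exact_mod_cast hD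
    rw [zero_mul, zero_add] at hhi
    have h1 : ((f n₀:ℝ) - (f n':ℝ))/(D:ℝ) ≤ (f n₀:ℝ) := by
      rw [div_le_iff₀ hDr]
      nlinarith
    have h2 : (n₀:ℝ) - (n':ℝ) ≤ (1/2)*Real.sqrt n₀ * (f n₀:ℝ) := by
      have hw0 : (0:ℝ) ≤ (1/2)*Real.sqrt n₀ := by positivity
      calc (n₀:ℝ) - (n':ℝ) ≤ (1/2)*Real.sqrt n₀ * (((f n₀:ℝ) - (f n':ℝ))/(D:ℝ)) := hhi
        _ ≤ (1/2)*Real.sqrt n₀ * (f n₀:ℝ) := mul_le_mul_of_nonneg_left h1 hw0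
    have h3 : (n₀:ℝ) - (n':ℝ) ≤ (1/4) * (n₀:ℝ) := by
      nlinarith [Real.sqrt_nonneg ((n₀:ℕ):ℝ)]
    have h4 : (n':ℝ) ≤ (N₃:ℝ) := by exact_mod_cast hn'.le
    have h5 : (n₀:ℝ) = 2*(N₃:ℝ) + 4 := by rw [hn₀]; push_cast; ring
    have h6 : (0:ℝ) ≤ (N₃:ℝ) := Nat.cast_nonneg _
    linarith
  · -- L > 0
    have key : ∀ ε : ℝ, 0 < ε → ε < L →
        (2*L-ε)*L^2 ≤ 2*(D:ℝ)*(L+ε) ∧ 2*(D:ℝ)*(L-ε) ≤ (2*L+ε)*L^2 := by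
      intro ε hε hεL
      have hLε1 : (0:ℝ) < L + ε := by linarith
      have hLε2 : (0:ℝ) < L - ε := by linarith
      set u : ℝ := (2*L-ε)/(L+ε) with hu
      set v : ℝ := (2*L+ε)/(L-ε) with hv
      have hu0 : 0 ≤ u := div_nonneg (by linarith) hLε1.le
      have hv0 : 0 ≤ v := div_nonneg (by linarith) hLε2.le
      have P := pack f g cf df cg dg N L hL0 hfrec hgrec hgpos hfL hgL hε
      have Rf := ratio_bound f hfL hε
      have Estep : ∀ᶠ m : ℕ in atTop,
          kfun f g cf cg m < m ∧ f m = f (kfun f g cf cg m) + D ∧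
          u * (f m:ℝ) ≤ (m:ℝ) - (kfun f g cf cg m : ℝ) ∧
          (m:ℝ) - (kfun f g cf cg m : ℝ) ≤ v * (f m:ℝ) + 0 := by
        filter_upwards [P, Rf, eventually_ge_atTop 1] with m hm hrm hm1
        obtain ⟨hrec, hgapb⟩ := hm
        have hrec' : f m = f (kfun f g cf cg m) + D := by rw [hDdef]; exact hrec
        have hklt : kfun f g cf cg m < m := by
          by_contra hcon
          push_neg at hcon
          have := hmf hcon
          omega
        obtain ⟨hga, hgb⟩ := abs_le.mp hgapb
        obtain ⟨hfa, hfb⟩ := abs_le.mp hrm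
        have hb1 : (f m:ℝ) ≤ (L+ε)*Real.sqrt m := by linarith
        have hb2 : (L-ε)*Real.sqrt m ≤ (f m:ℝ) := by linarith
        refine ⟨hklt, hrec', ?_, ?_⟩
        · have h1 : u * (f m:ℝ) ≤ u * ((L+ε)*Real.sqrt m) := mul_le_mul_of_nonneg_left hb1 hu0
          have h2 : u * ((L+ε)*Real.sqrt m) = (2*L-ε)*Real.sqrt m := by
            rw [hu]; field_simp
          linarith
        · have h1 : v * ((L-ε)*Real.sqrt m) ≤ v * (f m:ℝ) := mul_le_mul_of_nonneg_left hb2 hv0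
          have h2 : v * ((L-ε)*Real.sqrt m) = (2*L+ε)*Real.sqrt m := by
            rw [hv]; field_simp
          linarith
      obtain ⟨N₃, hN₃⟩ := eventually_atTop.mp Estep
      set C : ℤ := f N₃ with hC
      have In2 : ∀ᶠ n : ℕ in atTop, u * sx (D:ℝ) ((f n:ℝ)) ((C:ℝ)) ≤ (n:ℝ) := by
        filter_upwards [eventually_ge_atTop N₃] with n hn
        obtain ⟨n', hn', hmono', hlo, hhi⟩ :=
          chain_lemma f (kfun f g cf cg) D hD N₃ n u v 0 (fun m hm _ => hN₃ m hm) n hn le_rfl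
        have h1 : (f n' : ℝ) ≤ (C:ℝ) := by exact_mod_cast hmf hn'.le
        have h2 : (0:ℝ) ≤ (f n' : ℝ) := by exact_mod_cast hfpos n'
        have h3 : sx (D:ℝ) (f n) (C:ℝ) ≤ sx (D:ℝ) (f n) (f n') := sx_mono _ _ _ _ hDr h2 h1
        have h4 : u * sx (D:ℝ) (f n) (C:ℝ) ≤ u * sx (D:ℝ) (f n) (f n') :=
          mul_le_mul_of_nonneg_left h3 hu0
        have h5 : (0:ℝ) ≤ (n':ℝ) := Nat.cast_nonneg _
        linarith
      have In1 : ∀ᶠ n : ℕ in atTop, (n:ℝ) - (N₃:ℝ) ≤ v * sx (D:ℝ) ((f n:ℝ)) 0 := by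
        filter_upwards [eventually_ge_atTop N₃] with n hn
        obtain ⟨n', hn', hmono', hlo, hhi⟩ :=
          chain_lemma f (kfun f g cf cg) D hD N₃ n u v 0 (fun m hm _ => hN₃ m hm) n hn le_rfl
        have h2 : (0:ℝ) ≤ (f n' : ℝ) := by exact_mod_cast hfpos n'
        have h3 : sx (D:ℝ) (f n) (f n':ℝ) ≤ sx (D:ℝ) (f n) 0 := sx_mono _ _ _ _ hDr le_rfl h2
        have h4 : v * sx (D:ℝ) (f n) ((f n':ℝ)) ≤ v * sx (D:ℝ) (f n) 0 :=
          mul_le_mul_of_nonneg_left h3 hv0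
        have h5 : (n':ℝ) ≤ (N₃:ℝ) := by exact_mod_cast hn'.le
        linarith
      have T2 : u * (L^2/(2*(D:ℝ))) ≤ 1 := by
        refine le_of_tendsto ((hTc (C:ℝ)).const_mul u) ?_
        filter_upwards [In2, eventually_ge_atTop 1] with n hn hn1
        have hn0 : (0:ℝ) < (n:ℝ) := by exact_mod_cast hn1
        have he : u * (sx (D:ℝ) (f n) (C:ℝ) / n) = (u * sx (D:ℝ) (f n) (C:ℝ))/(n:ℝ) := by ring
        rw [he]
        exact (div_le_one hn0).mpr hn
      have T1 : 1 ≤ v * (L^2/(2*(D:ℝ))) := by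
        have t1 : Tendsto (fun n : ℕ => 1 - (N₃:ℝ) * (1/(n:ℝ))) atTop (nhds (1 - (N₃:ℝ) * 0)) :=
          tendsto_const_nhds.sub (tendsto_one_div_atTop_nhds_zero_nat.const_mul _)
        rw [mul_zero, sub_zero] at t1
        refine le_of_tendsto_of_tendsto t1 ((hTc 0).const_mul v) ?_
        filter_upwards [In1, eventually_ge_atTop 1] with n hn hn1
        have hn0 : (0:ℝ) < (n:ℝ) := by exact_mod_cast hn1
        have he1 : 1 - (N₃:ℝ)*(1/(n:ℝ)) = ((n:ℝ) - (N₃:ℝ))/(n:ℝ) := by field_simp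
        have he2 : v * (sx (D:ℝ) (f n) 0 / n) = (v * sx (D:ℝ) (f n) 0)/(n:ℝ) := by ring
        rw [he1, he2]
        gcongr
      constructor
      · have e1 : u * (L^2/(2*(D:ℝ))) = ((2*L-ε)*L^2) / ((L+ε)*(2*(D:ℝ))) := by
          rw [hu]; field_simp
        rw [e1, div_le_one (by positivity)] at T2
        linarith
      · have e2 : v * (L^2/(2*(D:ℝ))) = ((2*L+ε)*L^2) / ((L-ε)*(2*(D:ℝ))) := by
          rw [hv]; field_simp
        rw [e2, le_div_iff₀ (by positivity)] at T1
        linarith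
    have h1 : 2*L^3 ≤ 2*(D:ℝ)*L := by
      by_contra hcon
      push_neg at hcon
      have hK : (0:ℝ) < L^2 + 2*(D:ℝ) + 1 := by positivity
      set ε : ℝ := min (L/2) ((2*L^3 - 2*(D:ℝ)*L)/(L^2 + 2*(D:ℝ) + 1)) with hε
      have hε0 : 0 < ε := lt_min (by linarith) (div_pos (by linarith) hK)
      have hεL : ε < L := lt_of_le_of_lt (min_le_left _ _) (by linarith)
      have hεb : ε * (L^2 + 2*(D:ℝ) + 1) ≤ 2*L^3 - 2*(D:ℝ)*L := by
        have hm := min_le_right (L/2) ((2*L^3 - 2*(D:ℝ)*L)/(L^2 + 2*(D:ℝ) + 1))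
        calc ε * (L^2 + 2*(D:ℝ) + 1)
            ≤ ((2*L^3 - 2*(D:ℝ)*L)/(L^2 + 2*(D:ℝ) + 1)) * (L^2 + 2*(D:ℝ) + 1) :=
              mul_le_mul_of_nonneg_right hm hK.le
          _ = 2*L^3 - 2*(D:ℝ)*L := by field_simp
      have h := (key ε hε0 hεL).1
      nlinarith
    have h2 : 2*(D:ℝ)*L ≤ 2*L^3 := by
      by_contra hcon
      push_neg at hcon
      have hK : (0:ℝ) < L^2 + 2*(D:ℝ) + 1 := by positivity
      set ε : ℝ := min (L/2) ((2*(D:ℝ)*L - 2*L^3)/(L^2 + 2*(D:ℝ) + 1)) with hε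
      have hε0 : 0 < ε := lt_min (by linarith) (div_pos (by linarith) hK)
      have hεL : ε < L := lt_of_le_of_lt (min_le_left _ _) (by linarith)
      have hεb : ε * (L^2 + 2*(D:ℝ) + 1) ≤ 2*(D:ℝ)*L - 2*L^3 := by
        have hm := min_le_right (L/2) ((2*(D:ℝ)*L - 2*L^3)/(L^2 + 2*(D:ℝ) + 1))
        calc ε * (L^2 + 2*(D:ℝ) + 1)
            ≤ ((2*(D:ℝ)*L - 2*L^3)/(L^2 + 2*(D:ℝ) + 1)) * (L^2 + 2*(D:ℝ) + 1) :=
              mul_le_mul_of_nonneg_right hm hK.le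
          _ = 2*(D:ℝ)*L - 2*L^3 := by field_simp
      have h := (key ε hε0 hεL).2
      nlinarith
    have h3 : L^2 * L = (D:ℝ) * L := by nlinarith
    have hL2 : L^2 = (D:ℝ) := mul_right_cancel₀ (ne_of_gt hLpos) h3
    have h4 : ((df:ℝ) + (dg:ℝ)) = (D:ℝ) := by rw [hDdef]; push_cast; ring
    rw [h4, ← hL2, Real.sqrt_sq hL0]
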